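/- Let n ≥ 1, N ≥ 1, and let c : Fin N → (Fin n → Fin 4) assign to each index k a Pauli string, with corresponding unitary U^k = σ_{c(k)(1)} ⊗ … ⊗ σ_{c(k)(n)} (a Kronecker product of Pauli matrices). Let R(ρ) = (1/N) Σₖ U^k ρ (U^k)†, and let ρ₀ = (|0⟩⟨0|)^⊗n, the n-qubit all-zero basis state. Define χ : Fin 4 → {0,1} by χ(I) = χ(Z) = 0 and χ(X) = χ(Y) = 1, extended componentwise to strings. Then R(ρ₀) is diagonal in the computational basis and ‖R(ρ₀) − I/2ⁿ‖_∞ = max over b ∈ {0,1}ⁿ of |(#{k : χ∘c(k) = b})/N − 1/2ⁿ|. In particular, if at least a δ fraction of the N unitaries have χ∘c(k) = 0 (e.g., all equal the identity string), then ‖R(ρ₀) − I/2ⁿ‖_∞ ≥ δ − 1/2ⁿ, which shows that an encryption scheme built from a small-bias set can fail in the operator norm. -/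
import Mathlib


open Matrix
open scoped ComplexOrder

noncomputable section

/-- The four Pauli matrices, indexed by `Fin 4` as `I, X, Y, Z`. -/
def pauli : Fin 4 → Matrix (Fin 2) (Fin 2) ℂ :=
  ![1, !![0, 1; 1, 0], !![0, -Complex.I; Complex.I, 0], !![1, 0; 0, -1]]

/-- The Kronecker (tensor) product of `n` single-qubit matrices, as a `2ⁿ × 2ⁿ` matrix
indexed by functions `Fin n → Fin 2`. -/
def kron {n : ℕ} (M : Fin n → Matrix (Fin 2) (Fin 2) ℂ) :
    Matrix (Fin n → Fin 2) (Fin n → Fin 2) ℂ :=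
  fun i j => ∏ t, M t (i t) (j t)

/-- The operator norm of a matrix, i.e. the norm of the induced operator on Euclidean space;
for a Hermitian matrix this is the maximum of the absolute values of its eigenvalues. -/
def opNorm {m : Type*} [Fintype m] [DecidableEq m] (A : Matrix m m ℂ) : ℝ :=
  ‖Matrix.toEuclideanCLM (𝕜 := ℂ) A‖

/-- The `n`-qubit product state `(|0⟩⟨0|)^⊗n`. -/
def rho0 (n : ℕ) : Matrix (Fin n → Fin 2) (Fin n → Fin 2) ℂ :=
  kron (fun _ => !![1, 0; 0, 0])

/-- `χ(I) = χ(Z) = 0` and `χ(X) = χ(Y) = 1`. -/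
def chi : Fin 4 → Fin 2 := ![0, 1, 1, 0]


section Aux

lemma kron_mul {n : ℕ} (M P : Fin n → Matrix (Fin 2) (Fin 2) ℂ) :
    kron M * kron P = kron (fun t => M t * P t) := by
  ext i j
  simp only [kron, Matrix.mul_apply]
  rw [show (∏ t, ∑ l, M t (i t) l * P t l (j t)) = _ from Finset.prod_univ_sum _ _]
  rw [Fintype.piFinset_univ]
  rw [← Equiv.sum_comp (Equiv.refl _)]
  simp [Finset.prod_mul_distrib]

lemma kron_ct {n : ℕ} (M : Fin n → Matrix (Fin 2) (Fin 2) ℂ) :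
    (kron M)ᴴ = kron (fun t => (M t)ᴴ) := by
  ext i j
  simp [kron, Matrix.conjTranspose_apply, map_prod]

lemma pauli_conj (a : Fin 4) :
    pauli a * !![1, 0; 0, 0] * (pauli a)ᴴ
      = Matrix.of (fun i j => if i = chi a ∧ j = chi a then 1 else 0) := by
  fin_cases a <;> ext i j <;> fin_cases i <;> fin_cases j <;>
    simp [pauli, chi, Matrix.mul_apply, Fin.sum_univ_two, Matrix.conjTranspose_apply,
      Matrix.one_apply]

lemma kron_proj {n : ℕ} (b : Fin n → Fin 2) :
    (fun i j => ∏ t, (if i t = b t ∧ j t = b t then (1:ℂ) else 0))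
      = Matrix.diagonal (fun i => if b = i then (1:ℂ) else 0) := by
  funext i j
  rw [Finset.prod_boole]
  have h : (∀ t ∈ Finset.univ, i t = b t ∧ j t = b t) ↔ (i = b ∧ j = b) := by
    simp [funext_iff, forall_and]
  simp only [h]
  by_cases h1 : i = b
  · subst h1
    by_cases h2 : j = i
    · subst h2; simp
    · rw [if_neg (by tauto), Matrix.diagonal_apply_ne _ (Ne.symm h2)]
  · rw [if_neg (by tauto)]
    by_cases h2 : i = j
    · subst h2; rw [Matrix.diagonal_apply_eq, if_neg (fun hh => h1 hh.symm)]
    · rw [Matrix.diagonal_apply_ne _ h2]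

lemma clm_diag_apply {m : Type*} [Fintype m] [DecidableEq m] (v : m → ℂ)
    (x : EuclideanSpace ℂ m) (i : m) :
    (Matrix.toEuclideanCLM (𝕜 := ℂ) (Matrix.diagonal v) x) i = v i * x i := by
  have h := Matrix.ofLp_toEuclideanCLM (𝕜 := ℂ) (Matrix.diagonal v) x
  have := congrFun h i
  simpa [Matrix.mulVec_diagonal] using this

lemma norm_clm_diag {m : Type*} [Fintype m] [DecidableEq m] (v : m → ℂ)
    (x : EuclideanSpace ℂ m) :
    ‖Matrix.toEuclideanCLM (𝕜 := ℂ) (Matrix.diagonal v) x‖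
      = Real.sqrt (∑ i, ‖v i‖^2 * ‖x i‖^2) := by
  rw [EuclideanSpace.norm_eq]
  congr 1
  refine Finset.sum_congr rfl fun i _ => ?_
  rw [clm_diag_apply, norm_mul, mul_pow]

lemma opNorm_diag {m : Type*} [Fintype m] [DecidableEq m] [Nonempty m] (v : m → ℂ) :
    opNorm (Matrix.diagonal v) = ⨆ i, ‖v i‖ := by
  unfold opNorm
  apply le_antisymm
  · apply ContinuousLinearMap.opNorm_le_bound _ (Real.iSup_nonneg (fun i => norm_nonneg _))
    intro x
    rw [norm_clm_diag, EuclideanSpace.norm_eq]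
    rw [← Real.sqrt_sq (Real.iSup_nonneg (fun i : m => norm_nonneg (v i))),
      ← Real.sqrt_mul (by positivity)]
    apply Real.sqrt_le_sqrt
    rw [Finset.mul_sum]
    refine Finset.sum_le_sum fun i _ => ?_
    have hv : ‖v i‖ ≤ ⨆ i, ‖v i‖ :=
      le_ciSup (f := fun i => ‖v i‖) (Set.Finite.bddAbove (Set.finite_range _)) i
    have hsq : ‖v i‖^2 ≤ (⨆ i, ‖v i‖)^2 := pow_le_pow_left₀ (norm_nonneg _) hv 2
    have := sq_nonneg ‖x i‖
    nlinarith [norm_nonneg (x i)]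
  · refine ciSup_le fun i => ?_
    have h1 : ‖Matrix.toEuclideanCLM (𝕜 := ℂ) (Matrix.diagonal v) (EuclideanSpace.single i 1)‖
        = ‖v i‖ := by
      rw [norm_clm_diag]
      rw [show (∑ j, ‖v j‖^2 * ‖(EuclideanSpace.single i (1:ℂ)) j‖^2) = ‖v i‖^2 by
        rw [Finset.sum_eq_single i]
        · simp
        · intro b _ hb; simp [EuclideanSpace.single_apply, hb]
        · simp]
      exact Real.sqrt_sq (norm_nonneg _)
    calc ‖v i‖ = _ := h1.symm
      _ ≤ ‖Matrix.toEuclideanCLM (𝕜 := ℂ) (Matrix.diagonal v)‖ * ‖EuclideanSpace.single i (1:ℂ)‖ :=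
          ContinuousLinearMap.le_opNorm _ _
      _ = _ := by rw [EuclideanSpace.norm_single, norm_one, mul_one]

end Aux

/-- For a uniform mixture of `N` Pauli-string unitaries `U^k = σ_{c(k)(1)} ⊗ … ⊗ σ_{c(k)(n)}`
applied to the all-zeros state `ρ₀ = (|0⟩⟨0|)^⊗n`, the output `R(ρ₀)` is diagonal and
`‖R(ρ₀) − I/2ⁿ‖_∞` is the maximum over bit strings `b` of `|#{k : χ∘c(k) = b}/N − 1/2ⁿ|`;
in particular, if at least a `δ` fraction of the unitaries have `χ∘c(k) = 0`, then
`‖R(ρ₀) − I/2ⁿ‖_∞ ≥ δ − 1/2ⁿ`, so such small-bias-set schemes can fail in the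
operator norm. -/
theorem small_bias_fails_infty_norm (n N : ℕ) (hn : 1 ≤ n) (hN : 1 ≤ N)
    (c : Fin N → Fin n → Fin 4) :
    (Matrix.IsDiag (((1 : ℝ)/N) •
        ∑ k : Fin N, (kron (fun t => pauli (c k t)) * rho0 n
          * (kron (fun t => pauli (c k t)))ᴴ)))
    ∧ opNorm ((((1 : ℝ)/N) •
          ∑ k : Fin N, (kron (fun t => pauli (c k t)) * rho0 n
            * (kron (fun t => pauli (c k t)))ᴴ))
          - ((1 : ℝ)/2^n) • (1 : Matrix (Fin n → Fin 2) (Fin n → Fin 2) ℂ))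
        = ⨆ b : Fin n → Fin 2,
            |((Finset.univ.filter (fun k : Fin N => (fun t => chi (c k t)) = b)).card : ℝ)/N
              - 1/2^n|
    ∧ ∀ δ : ℝ,
        δ * N ≤ ((Finset.univ.filter
            (fun k : Fin N => (fun t => chi (c k t)) = fun _ => (0 : Fin 2))).card : ℝ) →
        δ - 1/2^n
          ≤ opNorm ((((1 : ℝ)/N) •
              ∑ k : Fin N, (kron (fun t => pauli (c k t)) * rho0 n
                * (kron (fun t => pauli (c k t)))ᴴ))
              - ((1 : ℝ)/2^n) • (1 : Matrix (Fin n → Fin 2) (Fin n → Fin 2) ℂ)) := by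
  classical
  set cnt : (Fin n → Fin 2) → ℕ := fun b =>
    (Finset.univ.filter (fun k : Fin N => (fun t => chi (c k t)) = b)).card with hcnt
  have perk : ∀ k : Fin N,
      kron (fun t => pauli (c k t)) * rho0 n * (kron (fun t => pauli (c k t)))ᴴ
        = Matrix.diagonal (fun i => if (fun t => chi (c k t)) = i then (1:ℂ) else 0) := by
    intro k
    rw [rho0, kron_ct, kron_mul, kron_mul]
    rw [show (fun t : Fin n => pauli (c k t) * !![1,0;0,0] * (pauli (c k t))ᴴ)
        = fun t => pauli (c k t) * (!![1,0;0,0] * (pauli (c k t))ᴴ) by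
      funext t; rw [Matrix.mul_assoc]]
    rw [show (fun t : Fin n => pauli (c k t) * (!![1,0;0,0] * (pauli (c k t))ᴴ))
        = fun t => Matrix.of (fun i j =>
            if i = chi (c k t) ∧ j = chi (c k t) then (1:ℂ) else 0) by
      funext t; rw [← Matrix.mul_assoc]; exact pauli_conj (c k t)]
    rw [← kron_proj (fun t => chi (c k t))]
    rfl
  have hsum : (∑ k : Fin N, (kron (fun t => pauli (c k t)) * rho0 n
        * (kron (fun t => pauli (c k t)))ᴴ))
      = Matrix.diagonal (fun b => (cnt b : ℂ)) := by
    rw [Finset.sum_congr rfl (fun k _ => perk k)]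
    ext i j
    by_cases h : i = j
    · subst h
      simp only [Matrix.sum_apply, Matrix.diagonal_apply_eq, hcnt]
      rw [Finset.sum_boole]
    · simp [Matrix.sum_apply, Matrix.diagonal_apply_ne _ h]
  have key : (((1 : ℝ)/N) • ∑ k : Fin N, (kron (fun t => pauli (c k t)) * rho0 n
        * (kron (fun t => pauli (c k t)))ᴴ))
      = Matrix.diagonal (fun b => (((cnt b : ℝ)/N : ℝ) : ℂ)) := by
    rw [hsum]
    ext i j
    by_cases h : i = j
    · subst h
      simp only [Matrix.smul_apply, Matrix.diagonal_apply_eq, Complex.real_smul]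
      push_cast
      ring
    · simp [Matrix.diagonal_apply_ne _ h]
  have hdiff : ((((1 : ℝ)/N) • ∑ k : Fin N, (kron (fun t => pauli (c k t)) * rho0 n
        * (kron (fun t => pauli (c k t)))ᴴ))
        - ((1 : ℝ)/2^n) • (1 : Matrix (Fin n → Fin 2) (Fin n → Fin 2) ℂ))
      = Matrix.diagonal (fun b => ((((cnt b : ℝ)/N - 1/2^n : ℝ)) : ℂ)) := by
    rw [key]
    ext i j
    by_cases h : i = j
    · subst h
      simp only [Matrix.sub_apply, Matrix.smul_apply, Matrix.diagonal_apply_eq,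
        Matrix.one_apply_eq, Complex.real_smul]
      push_cast
      ring
    · simp [Matrix.diagonal_apply_ne _ h, Matrix.one_apply_ne h]
  have hnorm : opNorm ((((1 : ℝ)/N) • ∑ k : Fin N, (kron (fun t => pauli (c k t)) * rho0 n
        * (kron (fun t => pauli (c k t)))ᴴ))
        - ((1 : ℝ)/2^n) • (1 : Matrix (Fin n → Fin 2) (Fin n → Fin 2) ℂ))
      = ⨆ b : Fin n → Fin 2, |((cnt b : ℝ))/N - 1/2^n| := by
    rw [hdiff, opNorm_diag]
    refine iSup_congr fun b => ?_
    rw [Complex.norm_real, Real.norm_eq_abs]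
  refine ⟨?_, hnorm, ?_⟩
  · rw [key]; exact Matrix.isDiag_diagonal _
  · intro δ hδ
    rw [hnorm]
    have hN0 : (0:ℝ) < N := by exact_mod_cast hN
    have h1 : δ ≤ (cnt (fun _ => (0 : Fin 2)) : ℝ)/N := by
      rw [le_div_iff₀ hN0]
      exact hδ
    calc δ - 1/2^n ≤ (cnt (fun _ => (0 : Fin 2)) : ℝ)/N - 1/2^n := by linarith
      _ ≤ |(cnt (fun _ => (0 : Fin 2)) : ℝ)/N - 1/2^n| := le_abs_self _
      _ ≤ _ := le_ciSup (f := fun b => |((cnt b : ℝ))/N - 1/2^n|)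
            (Set.Finite.bddAbove (Set.finite_range _)) _

end
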